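/- For natural numbers a, m, n with 0 < a < 2^m, the base-2^m digits of ((a * 2^(n*m)) - a) / (2^m - 1) in positions 0 through n-1 all equal a, and the digits in positions ≥ n are 0. -/

import Mathlib

private lemma sum_lt (a m : ℕ) (ham : a < 2 ^ m) :
    ∀ k, ∑ j ∈ Finset.range k, a * 2 ^ (m * j) < 2 ^ (m * k) := by
  intro k
  induction k with
  | zero => simp
  | succ k ih =>
    rw [Finset.sum_range_succ]
    have h1 : 2 ^ (m * (k + 1)) = 2 ^ (m * k) * 2 ^ m := by ring
    calc (∑ j ∈ Finset.range k, a * 2 ^ (m * j)) + a * 2 ^ (m * k)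
        < 2 ^ (m * k) + a * 2 ^ (m * k) := by omega
      _ = (1 + a) * 2 ^ (m * k) := by ring
      _ ≤ 2 ^ m * 2 ^ (m * k) := by
          apply Nat.mul_le_mul_right; omega
      _ = 2 ^ (m * (k + 1)) := by rw [h1]; ring

private lemma mul_sum (a m : ℕ) :
    ∀ k, (2 ^ m - 1) * (∑ j ∈ Finset.range k, a * 2 ^ (m * j)) = a * 2 ^ (k * m) - a := by
  intro k
  induction k with
  | zero => simp
  | succ k ih =>
    rw [Finset.sum_range_succ, Nat.mul_add, ih]
    have e1 : a * 2 ^ ((k + 1) * m) = 2 ^ m * (a * 2 ^ (m * k)) := by ring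
    have e2 : a * 2 ^ (k * m) = a * 2 ^ (m * k) := by ring
    have h3 : a ≤ a * 2 ^ (m * k) := Nat.le_mul_of_pos_right a (Nat.pow_pos (by norm_num))
    have h4 : (1:ℕ) ≤ 2 ^ m := Nat.one_le_two_pow
    rw [e1, e2, Nat.sub_one_mul]
    generalize a * 2 ^ (m * k) = x at *
    generalize (2:ℕ) ^ m = p at *
    have h5 : x ≤ p * x := Nat.le_mul_of_pos_left x (by omega)
    omega

theorem vector_of_constants_digits (a m n : ℕ) (ha : 0 < a) (ham : a < 2 ^ m) :
    (∀ i < n, ((a * 2 ^ (n * m) - a) / (2 ^ m - 1)) / 2 ^ (m * i) % 2 ^ m = a) ∧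
    (∀ i ≥ n, ((a * 2 ^ (n * m) - a) / (2 ^ m - 1)) / 2 ^ (m * i) % 2 ^ m = 0) := by
  have hm2 : 2 ≤ 2 ^ m := by omega
  have hpos : 0 < 2 ^ m - 1 := by omega
  have hV : (a * 2 ^ (n * m) - a) / (2 ^ m - 1)
      = ∑ j ∈ Finset.range n, a * 2 ^ (m * j) := by
    rw [← mul_sum a m n, Nat.mul_div_cancel_left _ hpos]
  rw [hV]
  constructor
  · intro i hi
    -- split the sum: n = i + (n - i)
    have hn : n = i + (n - i) := by omega
    rw [hn, Finset.sum_range_add]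
    have hL := sum_lt a m ham i
    set L := ∑ j ∈ Finset.range i, a * 2 ^ (m * j) with hLdef
    have hsplit : ∀ j, a * 2 ^ (m * (i + j)) = 2 ^ (m * i) * (a * 2 ^ (m * j)) := by
      intro j; ring
    simp_rw [hsplit]
    rw [← Finset.mul_sum, Nat.add_mul_div_left _ _ (Nat.pow_pos (by norm_num)),
      Nat.div_eq_of_lt hL, Nat.zero_add]
    -- now sum over range (n - i), which is positive
    obtain ⟨k, hk⟩ : ∃ k, n - i = k + 1 := ⟨n - i - 1, by omega⟩
    rw [hk, Finset.sum_range_succ']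
    have : ∀ j, a * 2 ^ (m * (j + 1)) = 2 ^ m * (a * 2 ^ (m * j)) := by intro j; ring
    simp_rw [this]
    rw [← Finset.mul_sum]
    simp [Nat.mul_add_mod, Nat.mod_eq_of_lt ham, Nat.add_mul_mod_self_left]
  · intro i hi
    have hS := sum_lt a m ham n
    have : 2 ^ (m * n) ≤ 2 ^ (m * i) := Nat.pow_le_pow_right (by norm_num) (by
      exact Nat.mul_le_mul_left m hi)
    rw [Nat.div_eq_of_lt (by omega)]
    simp
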